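/- For every x ∈ [0.37613, 0.58870], the unique solution θ(x) of w₂(x,θ) = 0 satisfies −x < θ(x) < 0; equivalently, x + θ(x) ∈ (0, x). -/

import Mathlib

/-- The Gaussian error function `erf x = (2/√π) ∫₀ˣ exp(−t²) dt`. -/
noncomputable def erf (x : ℝ) : ℝ :=
  (2 / Real.sqrt Real.pi) * ∫ t in (0:ℝ)..x, Real.exp (-t ^ 2)

/-- `w₂(x,θ) = θ + (1/√π)·exp(−(2x+θ)²)/(1 + erf(2x+θ))`. -/
noncomputable def w₂ (x θ : ℝ) : ℝ :=
  θ + (1 / Real.sqrt Real.pi) * (Real.exp (-(2 * x + θ) ^ 2) / (1 + erf (2 * x + θ)))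

open Real MeasureTheory Set

lemma gauss_integrable : Integrable (fun t : ℝ => Real.exp (-t ^ 2)) := by
  have := integrable_exp_neg_mul_sq (one_pos (α := ℝ)); simpa using this

lemma gauss_cont : Continuous fun t : ℝ => Real.exp (-t ^ 2) := by continuity

lemma gauss_ii (a b : ℝ) : IntervalIntegrable (fun t : ℝ => Real.exp (-t ^ 2)) volume a b :=
  gauss_cont.intervalIntegrable a b

lemma gauss_total : ∫ t : ℝ, Real.exp (-t ^ 2) = Real.sqrt Real.pi := by
  have := integral_gaussian 1; simpa using this

lemma gauss_Ioi0 : ∫ t in Ioi (0:ℝ), Real.exp (-t ^ 2) = Real.sqrt Real.pi / 2 := by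
  have := integral_gaussian_Ioi 1; simpa using this

lemma gauss_even (z : ℝ) :
    ∫ t in (-z)..(0:ℝ), Real.exp (-t ^ 2) = ∫ t in (0:ℝ)..z, Real.exp (-t ^ 2) := by
  have h := intervalIntegral.integral_comp_neg (a := (0:ℝ)) (b := z)
    (fun t : ℝ => Real.exp (-t ^ 2))
  simp only [neg_zero] at h
  rw [← h]
  apply intervalIntegral.integral_congr
  intro t _
  simp [neg_sq]

lemma key (z : ℝ) :
    Real.sqrt Real.pi * (1 + erf z) = 2 * ∫ t in Ioi (-z), Real.exp (-t ^ 2) := by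
  have hsp : (0:ℝ) < Real.sqrt Real.pi := Real.sqrt_pos.mpr Real.pi_pos
  have hIic : ∀ c : ℝ, (∫ t in Iic c, Real.exp (-t ^ 2))
      = Real.sqrt Real.pi - ∫ t in Ioi c, Real.exp (-t ^ 2) := by
    intro c
    have := intervalIntegral.integral_Iic_add_Ioi (b := c) (f := fun t : ℝ => Real.exp (-t ^ 2))
      gauss_integrable.integrableOn gauss_integrable.integrableOn
    rw [gauss_total] at this; linarith
  have hsub := intervalIntegral.integral_Iic_sub_Iic (a := (-z)) (b := (0:ℝ))
    (f := fun t : ℝ => Real.exp (-t ^ 2)) gauss_integrable.integrableOn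
    gauss_integrable.integrableOn
  rw [hIic, hIic, gauss_Ioi0, gauss_even z] at hsub
  have herf : Real.sqrt Real.pi * erf z = 2 * ∫ t in (0:ℝ)..z, Real.exp (-t ^ 2) := by
    unfold erf; field_simp
  nlinarith [hsub, herf]

-- positivity of half-line integral
lemma gauss_Ioi_pos (c : ℝ) : 0 < ∫ t in Ioi c, Real.exp (-t ^ 2) := by
  rw [(MeasureTheory.setIntegral_pos_iff_support_of_nonneg_ae ?_ ?_)]
  · have : Function.support (fun t : ℝ => Real.exp (-t ^ 2)) = univ := by
      ext t; simp [Function.support, (Real.exp_pos _).ne']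
    rw [this, univ_inter]
    simp [Real.volume_Ioi]
  · filter_upwards with t using (Real.exp_pos _).le
  · exact gauss_integrable.integrableOn

-- erf monotone
lemma erf_mono : Monotone erf := by
  intro a b hab
  unfold erf
  have h2 : (0:ℝ) ≤ 2 / Real.sqrt Real.pi := by positivity
  apply mul_le_mul_of_nonneg_left _ h2
  have := intervalIntegral.integral_add_adjacent_intervals (a := (0:ℝ)) (b := a) (c := b)
    (gauss_ii 0 a) (gauss_ii a b)
  have hnn : 0 ≤ ∫ t in a..b, Real.exp (-t ^ 2) :=
    intervalIntegral.integral_nonneg hab fun t _ => (Real.exp_pos _).le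
  linarith

lemma erf_neg (v : ℝ) : erf (-v) = - erf v := by
  unfold erf
  have h := intervalIntegral.integral_comp_neg (a := (0:ℝ)) (b := v)
    (fun t : ℝ => Real.exp (-t ^ 2))
  simp only [neg_zero] at h
  have h2 : (∫ t in (0:ℝ)..v, Real.exp (-(-t) ^ 2)) = ∫ t in (0:ℝ)..v, Real.exp (-t ^ 2) := by
    apply intervalIntegral.integral_congr; intro t _; simp [neg_sq]
  rw [h2] at h
  have h3 : (∫ t in (0:ℝ)..(-v), Real.exp (-t ^ 2)) = - ∫ t in (-v)..(0:ℝ), Real.exp (-t ^ 2) :=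
    intervalIntegral.integral_symm _ _
  rw [h3, ← h]; ring

-- pointwise bounds
lemma exp_neg_le (s : ℝ) (hs : 0 ≤ s) : Real.exp (-s) ≤ 1 / (1 + s) := by
  rw [Real.exp_neg, inv_eq_one_div, div_le_div_iff₀ (Real.exp_pos s) (by positivity)]
  nlinarith [Real.add_one_le_exp s]

lemma exp_neg_sq_le {u m : ℝ} (h : m ^ 2 ≤ u ^ 2) : Real.exp (-u ^ 2) ≤ 1 / (1 + m ^ 2) := by
  calc Real.exp (-u ^ 2) ≤ 1 / (1 + u ^ 2) := exp_neg_le _ (by positivity)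
    _ ≤ 1 / (1 + m ^ 2) := by
        apply one_div_le_one_div_of_le (by positivity); linarith

-- integral of polynomial bounds
lemma int_lb (c : ℝ) (hc : 0 ≤ c) :
    c - c ^ 3 / 3 ≤ ∫ t in (0:ℝ)..c, Real.exp (-t ^ 2) := by
  have h : (∫ t in (0:ℝ)..c, (1 - t ^ 2)) = c - c ^ 3 / 3 := by
    rw [intervalIntegral.integral_sub intervalIntegrable_const (intervalIntegral.intervalIntegrable_pow 2)]
    simp [integral_pow]
    ring
  rw [← h]
  apply intervalIntegral.integral_mono_on hc
    ((continuous_const.sub (continuous_pow 2)).intervalIntegrable 0 c) (gauss_ii 0 c)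
  intro t _
  simp only [Pi.sub_apply]
  nlinarith [Real.add_one_le_exp (-t ^ 2)]

lemma int_ub (c : ℝ) (hc : 0 ≤ c) :
    (∫ t in (0:ℝ)..c, Real.exp (-t ^ 2)) ≤ c - c ^ 3 / 3 + c ^ 5 / 5 := by
  have h : (∫ t in (0:ℝ)..c, (1 - t ^ 2 + t ^ 4)) = c - c ^ 3 / 3 + c ^ 5 / 5 := by
    rw [intervalIntegral.integral_add ((intervalIntegrable_const).sub (intervalIntegral.intervalIntegrable_pow 2)) (intervalIntegral.intervalIntegrable_pow 4),
      intervalIntegral.integral_sub intervalIntegrable_const (intervalIntegral.intervalIntegrable_pow 2)]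
    simp [integral_pow]
    ring
  rw [← h]
  apply intervalIntegral.integral_mono_on hc (gauss_ii 0 c)
    (((continuous_const.sub (continuous_pow 2)).add (continuous_pow 4)).intervalIntegrable 0 c)
  intro t _ 
  have h1 : Real.exp (-t ^ 2) ≤ 1 / (1 + t ^ 2) := exp_neg_le _ (by positivity)
  have h2 : 1 / (1 + t ^ 2) ≤ 1 - t ^ 2 + t ^ 4 := by
    rw [div_le_iff₀ (by positivity)]; nlinarith [sq_nonneg (t ^ 2), sq_nonneg t]
  simp only [Pi.add_apply, Pi.sub_apply]
  linarith

lemma sqrt_pi_lb : (1.772453 : ℝ) ≤ Real.sqrt Real.pi := by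
  have h := Real.sq_sqrt Real.pi_nonneg
  nlinarith [Real.pi_gt_d6, Real.sqrt_nonneg Real.pi]

lemma sqrt_pi_pos : (0:ℝ) < Real.sqrt Real.pi := Real.sqrt_pos.mpr Real.pi_pos

lemma erf_lb_pos (c : ℝ) (hc : 0 ≤ c) :
    Real.sqrt Real.pi + 2 * (c - c ^ 3 / 3) ≤ Real.sqrt Real.pi * (1 + erf c) := by
  have h : Real.sqrt Real.pi * erf c = 2 * ∫ t in (0:ℝ)..c, Real.exp (-t ^ 2) := by
    unfold erf; field_simp
  nlinarith [int_lb c hc]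

lemma erf_lb_neg (v : ℝ) (hv : 0 ≤ v) :
    Real.sqrt Real.pi - 2 * (v - v ^ 3 / 3 + v ^ 5 / 5) ≤ Real.sqrt Real.pi * (1 + erf (-v)) := by
  have h : Real.sqrt Real.pi * erf v = 2 * ∫ t in (0:ℝ)..v, Real.exp (-t ^ 2) := by
    unfold erf; field_simp
  rw [erf_neg]
  nlinarith [int_ub v hv]

lemma piece {x u : ℝ} (a C L E : ℝ) (hau : a ≤ u)
    (hL : L ≤ Real.sqrt Real.pi * (1 + erf a)) (hL0 : 0 ≤ L)
    (hC : C ≤ 2 * x - u) (hC0 : 0 ≤ C)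
    (hE : Real.exp (-u ^ 2) ≤ E) (hnum : E < C * L) :
    Real.exp (-u ^ 2) < Real.sqrt Real.pi * ((2 * x - u) * (1 + erf u)) := by
  have h1 : Real.sqrt Real.pi * (1 + erf a) ≤ Real.sqrt Real.pi * (1 + erf u) :=
    mul_le_mul_of_nonneg_left (by linarith [erf_mono hau]) (Real.sqrt_nonneg _)
  calc Real.exp (-u ^ 2) ≤ E := hE
    _ < C * L := hnum
    _ ≤ (2 * x - u) * (Real.sqrt Real.pi * (1 + erf u)) :=
        mul_le_mul hC (by linarith) hL0 (by linarith)
    _ = Real.sqrt Real.pi * ((2 * x - u) * (1 + erf u)) := by ring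

lemma quartic (c : ℝ) (hc : (2.33:ℝ) ≤ c) : (c + 0.50452) * Real.exp (-c) < 0.50452 := by
  have hp4 : (0:ℝ) < (1 + c / 4) ^ 4 := by positivity
  have hexpc : Real.exp (-c) ≤ 1 / (1 + c / 4) ^ 4 := by
    rw [Real.exp_neg, inv_eq_one_div]
    apply one_div_le_one_div_of_le (by positivity)
    calc (1 + c / 4) ^ 4 ≤ (Real.exp (c / 4)) ^ 4 := by
          apply pow_le_pow_left₀ (by linarith) (by linarith [Real.add_one_le_exp (c / 4)])
      _ = Real.exp c := by rw [← Real.exp_nat_mul]; congr 1; push_cast; ring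
  have key2 : (c + 0.50452) * (1 / (1 + c / 4) ^ 4) < 0.50452 := by
    rw [mul_one_div, div_lt_iff₀ hp4]
    have ha : (2.5:ℝ) ≤ (1 + c / 4) ^ 2 := by nlinarith
    nlinarith [ha, hc, sq_nonneg (c - 2.34)]
  have h3 : (c + 0.50452) * Real.exp (-c) ≤ (c + 0.50452) * (1 / (1 + c / 4) ^ 4) :=
    mul_le_mul_of_nonneg_left hexpc (by linarith)
  linarith

lemma exp_neg_lt_one {c : ℝ} (hc : (0:ℝ) < c) : Real.exp (-c) < 1 := by
  rw [Real.exp_neg]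
  rw [inv_lt_one_iff₀]
  right
  calc (1:ℝ) < 1 + c := by linarith
    _ ≤ Real.exp c := by linarith [Real.add_one_le_exp c]

lemma case1' (x v : ℝ) (hx : (0.37613:ℝ) ≤ x) (hv : (0.665:ℝ) ≤ v) :
    Real.exp (-v ^ 2) < Real.sqrt Real.pi * ((2 * x + v) * (1 + erf (-v))) := by
  have hcpos : (0:ℝ) < 2 * v + 1 := by linarith
  have hkey : Real.sqrt Real.pi * (1 + erf (-v)) = 2 * ∫ t in Ioi v, Real.exp (-t ^ 2) := by
    simpa using key (-v)
  have hmono1 : (∫ t in Ioc v (v+1), Real.exp (-v ^ 2 - (2 * v + 1) * (t - v)))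
      ≤ ∫ t in Ioc v (v+1), Real.exp (-t ^ 2) := by
    apply setIntegral_mono_on
    · exact (Real.continuous_exp.comp (by continuity)).integrableOn_Ioc
    · exact (Real.continuous_exp.comp (by continuity)).integrableOn_Ioc
    · exact measurableSet_Ioc
    · intro t ht
      apply Real.exp_le_exp.mpr
      nlinarith [mul_nonneg (sub_nonneg.mpr ht.1.le) (sub_nonneg.mpr ht.2)]
  have hmono2 : (∫ t in Ioc v (v+1), Real.exp (-t ^ 2)) ≤ ∫ t in Ioi v, Real.exp (-t ^ 2) := by
    apply setIntegral_mono_set gauss_integrable.integrableOn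
    · filter_upwards with t using (Real.exp_pos _).le
    · exact HasSubset.Subset.eventuallyLE Ioc_subset_Ioi_self
  have hval : (∫ t in Ioc v (v+1), Real.exp (-v ^ 2 - (2 * v + 1) * (t - v)))
      = Real.exp (-v ^ 2) * (1 - Real.exp (-(2 * v + 1))) / (2 * v + 1) := by
    rw [← intervalIntegral.integral_of_le (by linarith : v ≤ v + 1)]
    have hderiv : ∀ t ∈ uIcc v (v+1),
        HasDerivAt (fun s => -Real.exp (-v ^ 2 - (2 * v + 1) * (s - v)) / (2 * v + 1))
          (Real.exp (-v ^ 2 - (2 * v + 1) * (t - v))) t := by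
      intro t _
      have h1 : HasDerivAt (fun s : ℝ => -v ^ 2 - (2 * v + 1) * (s - v)) (-(2 * v + 1)) t := by
        exact ((((hasDerivAt_id t).sub_const v).const_mul (2 * v + 1)).const_sub (-v ^ 2)).congr_deriv (by ring)
      have h2 := (h1.exp.div_const (2 * v + 1)).neg
      refine (h2.congr_deriv ?_).congr_of_eventuallyEq (Filter.Eventually.of_forall fun s => ?_)
      · rw [mul_neg, neg_div, neg_neg, mul_div_assoc, div_self hcpos.ne', mul_one]
      · simp only [Pi.neg_apply]; ring
    rw [intervalIntegral.integral_eq_sub_of_hasDerivAt hderiv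
      ((Real.continuous_exp.comp (by continuity)).intervalIntegrable _ _)]
    rw [show -v ^ 2 - (2 * v + 1) * (v + 1 - v) = (-v ^ 2) + (-(2 * v + 1)) by ring,
      show -v ^ 2 - (2 * v + 1) * (v - v) = -v ^ 2 + 0 by ring, Real.exp_add, Real.exp_add]
    field_simp
    ring_nf
    simp only [Real.exp_zero]
    ring
  have hnum : 2 * v + 1 < 2 * (2 * x + v) * (1 - Real.exp (-(2 * v + 1))) := by
    have hq := quartic (2 * v + 1) (by linarith)
    have he1 : Real.exp (-(2 * v + 1)) < 1 := exp_neg_lt_one hcpos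
    have m2 : (2 * v + 1 + 0.50452) * (1 - Real.exp (-(2 * v + 1)))
        ≤ 2 * (2 * x + v) * (1 - Real.exp (-(2 * v + 1))) := by
      apply mul_le_mul_of_nonneg_right _ (by linarith)
      linarith
    nlinarith [hq, m2]
  have hQc : Real.exp (-v ^ 2) * (1 - Real.exp (-(2 * v + 1)))
      ≤ (2 * v + 1) * ∫ t in Ioi v, Real.exp (-t ^ 2) := by
    have h := hmono1.trans hmono2
    rw [hval] at h
    have h2 := mul_le_mul_of_nonneg_left h hcpos.le
    calc Real.exp (-v ^ 2) * (1 - Real.exp (-(2 * v + 1)))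
        = (2 * v + 1) * (Real.exp (-v ^ 2) * (1 - Real.exp (-(2 * v + 1))) / (2 * v + 1)) := by
          field_simp
      _ ≤ (2 * v + 1) * ∫ t in Ioi v, Real.exp (-t ^ 2) := h2
  have h5 := mul_lt_mul_of_pos_left hnum (Real.exp_pos (-v ^ 2))
  have h7 := mul_le_mul_of_nonneg_left hQc (by nlinarith : (0:ℝ) ≤ 2 * (2 * x + v))
  have h8 : (2 * v + 1) * Real.exp (-v ^ 2)
      < (2 * v + 1) * (2 * (2 * x + v) * ∫ t in Ioi v, Real.exp (-t ^ 2)) := by nlinarith [h5, h7]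
  have h9 := (mul_lt_mul_iff_right₀ hcpos).mp h8
  calc Real.exp (-v ^ 2) < 2 * (2 * x + v) * ∫ t in Ioi v, Real.exp (-t ^ 2) := h9
    _ = (2 * x + v) * (2 * ∫ t in Ioi v, Real.exp (-t ^ 2)) := by ring
    _ = Real.sqrt Real.pi * ((2 * x + v) * (1 + erf (-v))) := by rw [← hkey]; ring

lemma case1 {x u : ℝ} (hx : (0.37613:ℝ) ≤ x) (hu : u ≤ -0.665) :
    Real.exp (-u ^ 2) < Real.sqrt Real.pi * ((2 * x - u) * (1 + erf u)) := by
  have h := case1' x (-u) hx (by linarith)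
  rw [neg_neg] at h
  calc Real.exp (-u ^ 2) = Real.exp (-(-u) ^ 2) := by rw [neg_sq]
    _ < Real.sqrt Real.pi * ((2 * x + -u) * (1 + erf u)) := h
    _ = Real.sqrt Real.pi * ((2 * x - u) * (1 + erf u)) := by ring

lemma core {x u : ℝ} (hx : (0.37613:ℝ) ≤ x) (hu : u ≤ x) :
    Real.exp (-u ^ 2) < Real.sqrt Real.pi * ((2 * x - u) * (1 + erf u)) := by
  rcases le_or_gt u (-0.665) with h | h0
  · exact case1 hx h
  rcases le_or_gt u (-0.636) with h | hm0_636
  · exact piece (-0.665) (1.38826) (1.772453 - 2*((0.665:ℝ) - 0.665^3/3 + 0.665^5/5)) (1/(1+(0.636:ℝ)^2)) (by linarith)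
      (by
        have h1 := erf_lb_neg 0.665 (by norm_num)
        have h2 := sqrt_pi_lb
        linarith)
      (by norm_num) (by linarith) (by norm_num) (exp_neg_sq_le (by nlinarith)) (by norm_num)
  rcases le_or_gt u (-0.512) with h | hm0_512
  · exact piece (-0.636) (1.26426) (1.772453 - 2*((0.636:ℝ) - 0.636^3/3 + 0.636^5/5)) (1/(1+(0.512:ℝ)^2)) (by linarith)
      (by
        have h1 := erf_lb_neg 0.636 (by norm_num)
        have h2 := sqrt_pi_lb
        linarith)
      (by norm_num) (by linarith) (by norm_num) (exp_neg_sq_le (by nlinarith)) (by norm_num)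
  rcases le_or_gt u (-0.34) with h | hm0_34
  · exact piece (-0.512) (1.09226) (1.772453 - 2*((0.512:ℝ) - 0.512^3/3 + 0.512^5/5)) (1/(1+(0.34:ℝ)^2)) (by linarith)
      (by
        have h1 := erf_lb_neg 0.512 (by norm_num)
        have h2 := sqrt_pi_lb
        linarith)
      (by norm_num) (by linarith) (by norm_num) (exp_neg_sq_le (by nlinarith)) (by norm_num)
  rcases le_or_gt u (-0.132) with h | hm0_132
  · exact piece (-0.34) (0.88426) (1.772453 - 2*((0.34:ℝ) - 0.34^3/3 + 0.34^5/5)) (1/(1+(0.132:ℝ)^2)) (by linarith)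
      (by
        have h1 := erf_lb_neg 0.34 (by norm_num)
        have h2 := sqrt_pi_lb
        linarith)
      (by norm_num) (by linarith) (by norm_num) (exp_neg_sq_le (by nlinarith)) (by norm_num)
  rcases le_or_gt u (0.087) with h | h0_087
  · exact piece (-0.132) (0.66526) (1.772453 - 2*((0.132:ℝ) - 0.132^3/3 + 0.132^5/5)) (1/(1+(0:ℝ)^2)) (by linarith)
      (by
        have h1 := erf_lb_neg 0.132 (by norm_num)
        have h2 := sqrt_pi_lb
        linarith)
      (by norm_num) (by linarith) (by norm_num) (exp_neg_sq_le (by nlinarith [sq_nonneg u])) (by norm_num)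
  rcases le_or_gt u (0.24) with h | h0_24
  · exact piece (0.087) (0.51226) (1.772453 + 2*((0.087:ℝ) - 0.087^3/3)) (1/(1+(0.087:ℝ)^2)) (by linarith)
      (by
        have h1 := erf_lb_pos 0.087 (by norm_num)
        have h2 := sqrt_pi_lb
        linarith)
      (by norm_num) (by linarith) (by norm_num) (exp_neg_sq_le (by nlinarith)) (by norm_num)
  rcases le_or_gt u (0.329) with h | h0_329
  · exact piece (0.24) (0.42326) (1.772453 + 2*((0.24:ℝ) - 0.24^3/3)) (1/(1+(0.24:ℝ)^2)) (by linarith)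
      (by
        have h1 := erf_lb_pos 0.24 (by norm_num)
        have h2 := sqrt_pi_lb
        linarith)
      (by norm_num) (by linarith) (by norm_num) (exp_neg_sq_le (by nlinarith)) (by norm_num)
  · exact piece (0.329) (0.37613) (1.772453 + 2*((0.329:ℝ) - 0.329^3/3)) (1/(1+(0.329:ℝ)^2)) (by linarith)
      (by
        have h1 := erf_lb_pos 0.329 (by norm_num)
        have h2 := sqrt_pi_lb
        linarith)
      (by norm_num) (by linarith) (by norm_num) (exp_neg_sq_le (by nlinarith)) (by norm_num)

lemma one_add_erf_pos (z : ℝ) : 0 < 1 + erf z := by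
  nlinarith [key z, gauss_Ioi_pos (-z), sqrt_pi_pos]

/-- Any solution `θ` of `w₂(x,θ) = 0` (in particular the unique one `θ(x)`)
satisfies `−x < θ < 0`, i.e. `x + θ ∈ (0, x)`. -/
theorem stmt4 (x : ℝ) (hx : x ∈ Set.Icc (0.37613 : ℝ) 0.58870) (θ : ℝ) (hθ : w₂ x θ = 0) :
    θ ∈ Set.Ioo (-x) 0 := by
  obtain ⟨hx1, hx2⟩ := hx
  have hsp := sqrt_pi_pos
  unfold w₂ at hθ
  have hD := one_add_erf_pos (2 * x + θ)
  have hE := Real.exp_pos (-(2 * x + θ) ^ 2)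
  have hfrac : 0 < (1 / Real.sqrt Real.pi) *
      (Real.exp (-(2 * x + θ) ^ 2) / (1 + erf (2 * x + θ))) := by positivity
  have hθneg : θ < 0 := by linarith
  have hEq : Real.exp (-(2 * x + θ) ^ 2)
      = Real.sqrt Real.pi * (-θ) * (1 + erf (2 * x + θ)) := by
    have h2 : (1 / Real.sqrt Real.pi) *
        (Real.exp (-(2 * x + θ) ^ 2) / (1 + erf (2 * x + θ))) = -θ := by linarith
    field_simp at h2
    linarith [h2]
  constructor
  · by_contra hcon
    push_neg at hcon
    have hux : 2 * x + θ ≤ x := by linarith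
    have hcore := core hx1 hux
    nlinarith [hcore, hEq]
  · exact hθneg
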